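/- Under the characteristic-set hypotheses on P, C = [C_1,…,C_r], I_j = ini(C_j) and I = {I_1,…,I_r}, for any extension field L of K one has the inclusions Zero(C/I) ⊆ Zero(P) ⊆ Zero(C), where zeros are taken in L^n. -/

import Mathlib

open MvPolynomial

variable {n : ℕ} {K : Type*} [Field K]

/-- Lexicographic order on monomials (exponent vectors) induced by the variable
ordering `x_1 < ⋯ < x_n`: higher-indexed variables are more significant. -/
def MonLt {n : ℕ} (a b : Fin n →₀ ℕ) : Prop :=
  ∃ i : Fin n, a i < b i ∧ ∀ j : Fin n, i < j → a j = b j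

/-- The order `P < Q` on polynomials: `P < Q` iff `lt(P) <_lex lt(Q)`, or the
heading terms agree and the tails satisfy `P - lm(P) < Q - lm(Q)` (with `0 < R`
for every nonzero `R`).  Equivalently (since only supports matter): the supports
of `P` and `Q` differ and the lex-greatest monomial in their symmetric
difference belongs to the support of `Q`. -/
def PoLt (P Q : MvPolynomial (Fin n) K) : Prop :=
  ∃ m ∈ Q.support \ P.support,
    ∀ m' ∈ (P.support \ Q.support) ∪ (Q.support \ P.support), m' ≠ m → MonLt m' m

/-- `P ≈ Q` : neither `P < Q` nor `Q < P`. -/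
def PoEq (P Q : MvPolynomial (Fin n) K) : Prop := ¬ PoLt P Q ∧ ¬ PoLt Q P

/-- The class of a polynomial: the (1-based) index of its leading variable;
`0` for (nonzero) constants. -/
noncomputable def cls (P : MvPolynomial (Fin n) K) : ℕ :=
  P.vars.sup fun i => i.1 + 1

/-- The leading degree of a polynomial: its degree in its leading variable;
`0` for constants. -/
noncomputable def ldeg (P : MvPolynomial (Fin n) K) : ℕ :=
  WithBot.recBotCoe 0 (fun i => P.degreeOf i) P.vars.max

/-- Ranking of polynomials: `P ≺ Q`. -/
def RankLt (P Q : MvPolynomial (Fin n) K) : Prop :=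
  cls P < cls Q ∨ (cls P = cls Q ∧ ldeg P < ldeg Q)

/-- `P ∼ Q` : neither `P ≺ Q` nor `Q ≺ P`. -/
def RankEq (P Q : MvPolynomial (Fin n) K) : Prop := ¬ RankLt P Q ∧ ¬ RankLt Q P

/-- `P` is reduced w.r.t. a nonconstant `Q`: `deg(P, lv(Q)) < ldeg(Q)`. -/
def ReducedWrt (P Q : MvPolynomial (Fin n) K) : Prop :=
  ∀ i : Fin n, Q.vars.max = (i : WithBot (Fin n)) → P.degreeOf i < Q.degreeOf i

/-- A triangular set: a list of nonconstant polynomials with strictly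
increasing leading variables. -/
def IsTriangular (T : List (MvPolynomial (Fin n) K)) : Prop :=
  (∀ P ∈ T, 0 < cls P) ∧ T.Chain' fun P Q => cls P < cls Q

/-- Ranking of triangular sets (as lists): `T ≺ S`. -/
def TriLt (T S : List (MvPolynomial (Fin n) K)) : Prop :=
  (∃ i, i < T.length ∧ i < S.length ∧
      (∀ j < i, RankEq (T.getD j 0) (S.getD j 0)) ∧
      RankLt (T.getD i 0) (S.getD i 0)) ∨
  (S.length < T.length ∧ ∀ j < S.length, RankEq (T.getD j 0) (S.getD j 0))

/-- `T ∼ S` : neither `T ≺ S` nor `S ≺ T`. -/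
def TriEq (T S : List (MvPolynomial (Fin n) K)) : Prop := ¬ TriLt T S ∧ ¬ TriLt S T

/-- An ascending set: either a triangular set in which every element is reduced
w.r.t. all earlier elements (non-contradictory), or a single nonzero constant
(contradictory). -/
def IsAscending (A : List (MvPolynomial (Fin n) K)) : Prop :=
  (IsTriangular A ∧ A.Pairwise fun P Q => ReducedWrt Q P) ∨
  ∃ a : K, a ≠ 0 ∧ A = [MvPolynomial.C a]

/-- A basic set of a polynomial set `S`: an ascending set contained in `S`
such that no ascending set contained in `S` has strictly lower ranking. -/
def IsBasicSet (B : List (MvPolynomial (Fin n) K))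
    (S : Set (MvPolynomial (Fin n) K)) : Prop :=
  IsAscending B ∧ (∀ b ∈ B, b ∈ S) ∧
    ∀ B' : List (MvPolynomial (Fin n) K),
      IsAscending B' → (∀ b ∈ B', b ∈ S) → ¬ TriLt B' B

/-- A medial set of a polynomial set `S`: an ascending set contained in the
ideal `⟨S⟩` whose ranking is not higher than that of any basic set of `S`. -/
def IsMedialSet (M : List (MvPolynomial (Fin n) K))
    (S : Set (MvPolynomial (Fin n) K)) : Prop :=
  IsAscending M ∧ (∀ F ∈ M, F ∈ Ideal.span S) ∧
    ∀ B : List (MvPolynomial (Fin n) K), IsBasicSet B S → ¬ TriLt B M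

/-- The leading coefficient of `P` regarded as a univariate polynomial in
`x_q`, as a polynomial in the remaining variables. -/
noncomputable def lcOf (P : MvPolynomial (Fin n) K) (q : Fin n) :
    MvPolynomial (Fin n) K :=
  ∑ m ∈ P.support.filter fun m => m q = P.degreeOf q,
    MvPolynomial.monomial (m.erase q) (P.coeff m)

/-- The initial of `P`: its leading coefficient w.r.t. its leading variable. -/
noncomputable def initOf (P : MvPolynomial (Fin n) K) : MvPolynomial (Fin n) K :=
  WithBot.recBotCoe P (fun q => lcOf P q) P.vars.max
lemma getD_mem_aux {α : Type*} {l : List α} {j : ℕ} (h : j < l.length) (d : α) :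
    l.getD j d ∈ l := by
  rw [List.getD_eq_getElem?_getD, List.getElem?_eq_getElem h]
  exact List.getElem_mem _

/-- under the characteristic-set hypotheses,
`Zero(C/I) ⊆ Zero(P) ⊆ Zero(C)` in any extension field `L` of `K`. -/
theorem charSet_zero_inclusions
    {n : ℕ} {K : Type*} [Field K] (hn : 1 ≤ n)
    {L : Type*} [Field L] [Algebra K L]
    (P : Finset (MvPolynomial (Fin n) K)) (hPne : P.Nonempty)
    (C : List (MvPolynomial (Fin n) K))
    (hCasc : IsAscending C) (hCnc : ∀ c ∈ C, 0 < cls c)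
    (hCideal : ∀ c ∈ C, c ∈ Ideal.span (↑P : Set (MvPolynomial (Fin n) K)))
    (hprem : ∀ p ∈ P, ∃ (s : ℕ → ℕ) (G : ℕ → MvPolynomial (Fin n) K),
      (∏ j ∈ Finset.range C.length, initOf (C.getD j 0) ^ s j) * p
        = ∑ j ∈ Finset.range C.length, G j * C.getD j 0) :
    ∀ a : Fin n → L,
      (((∀ c ∈ C, MvPolynomial.aeval a c = 0) ∧
          (∀ c ∈ C, MvPolynomial.aeval a (initOf c) ≠ 0)) →
        ∀ p ∈ P, MvPolynomial.aeval a p = 0) ∧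
      ((∀ p ∈ P, MvPolynomial.aeval a p = 0) →
        ∀ c ∈ C, MvPolynomial.aeval a c = 0) := by
  intro a
  constructor
  · rintro ⟨hz, hi⟩ p hp
    obtain ⟨s, G, heq⟩ := hprem p hp
    have h := congrArg (MvPolynomial.aeval a) heq
    simp only [map_mul, map_sum, map_prod, map_pow] at h
    have hsum : (∑ j ∈ Finset.range C.length,
        MvPolynomial.aeval a (G j) * MvPolynomial.aeval a (C.getD j 0)) = 0 := by
      apply Finset.sum_eq_zero
      intro j hj
      rw [Finset.mem_range] at hj
      rw [hz (C.getD j 0) (getD_mem_aux hj 0), mul_zero]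
    rw [hsum] at h
    have hprod : (∏ j ∈ Finset.range C.length,
        MvPolynomial.aeval a (initOf (C.getD j 0)) ^ s j) ≠ 0 := by
      apply Finset.prod_ne_zero_iff.2
      intro j hj
      rw [Finset.mem_range] at hj
      exact pow_ne_zero _ (hi (C.getD j 0) (getD_mem_aux hj 0))
    exact (mul_eq_zero.1 h).resolve_left hprod
  · intro hz c hc
    refine Submodule.span_induction (p := fun x _ => MvPolynomial.aeval a x = 0)
      (fun x hx => hz x hx) (map_zero _) (fun x y _ _ hx hy => by
        rw [map_add, hx, hy, add_zero]) (fun x y _ hy => by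
        rw [smul_eq_mul, map_mul, hy, mul_zero]) (hCideal c hc)
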